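/- Every integer solution of the equation x⁴ + x*y² + y³ = 0 is either (0, 0) or of the form (x, y) = (-w²*(1+w), -w³*(1+w)) for some integer w. Conversely, every pair of this form is a solution. -/

import Mathlib

theorem stmt_7 (x y : ℤ) :
    x ^ 4 + x * y ^ 2 + y ^ 3 = 0 ↔
      (x = 0 ∧ y = 0) ∨
      ∃ w : ℤ, x = -w ^ 2 * (1 + w) ∧ y = -w ^ 3 * (1 + w) := by
  constructor
  · intro h
    by_cases hx : x = 0
    · subst hx
      left
      constructor
      · rfl
      · have : y ^ 3 = 0 := by linarith [h]
        exact pow_eq_zero_iff (by norm_num) |>.mp this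
    · right
      have hy : y ≠ 0 := by
        intro hy
        subst hy
        apply hx
        have : x ^ 4 = 0 := by linarith [h]
        exact pow_eq_zero_iff (by norm_num) |>.mp this
      set g : ℤ := (Int.gcd x y : ℤ) with hg
      have hgpos : 0 < g := by
        rw [hg]
        exact_mod_cast Int.gcd_pos_of_ne_zero_left y hx
      have hgx : g ∣ x := Int.gcd_dvd_left x y
      have hgy : g ∣ y := Int.gcd_dvd_right x y
      obtain ⟨a, ha⟩ := hgx
      obtain ⟨b, hb⟩ := hgy
      have hgne : g ≠ 0 := ne_of_gt hgpos
      -- coprimality of a b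
      have hcop : IsCoprime a b := by
        rw [Int.isCoprime_iff_gcd_eq_one]
        have h1 : a = x / g := by
          rw [ha]; exact (Int.mul_ediv_cancel_left _ hgne).symm
        have h2 : b = y / g := by
          rw [hb]; exact (Int.mul_ediv_cancel_left _ hgne).symm
        rw [h1, h2, hg]
        exact Int.gcd_div_gcd_div_gcd (Int.gcd_pos_of_ne_zero_left y hx)
      -- divide the equation by g^3
      have key : g * a ^ 4 + a * b ^ 2 + b ^ 3 = 0 := by
        have h3 : g ^ 3 * (g * a ^ 4 + a * b ^ 2 + b ^ 3) = 0 := by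
          rw [ha, hb] at h; ring_nf; ring_nf at h; linarith [h]
        have : g ^ 3 ≠ 0 := pow_ne_zero 3 hgne
        exact (mul_eq_zero.mp h3).resolve_left this
      -- a divides b^3
      have hab3 : a ∣ b ^ 3 := ⟨-(g * a ^ 3 + b ^ 2), by linarith [key]⟩
      have hunit : IsUnit a := (hcop.pow_right (n := 3)).isUnit_of_dvd hab3
      rcases Int.isUnit_iff.mp hunit with h1 | h1
      · -- a = 1
        refine ⟨b, ?_, ?_⟩
        · rw [ha, h1]
          subst h1
          have : g = -(b ^ 2 + b ^ 3) := by linarith [key]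
          rw [this]; ring
        · rw [hb]
          subst h1
          have : g = -(b ^ 2 + b ^ 3) := by linarith [key]
          rw [this]; ring
      · -- a = -1
        refine ⟨-b, ?_, ?_⟩
        · rw [ha, h1]
          subst h1
          have : g = b ^ 2 - b ^ 3 := by nlinarith [key]
          rw [this]; ring
        · rw [hb]
          subst h1
          have : g = b ^ 2 - b ^ 3 := by nlinarith [key]
          rw [this]; ring
  · rintro (⟨hx, hy⟩ | ⟨w, hx, hy⟩) <;> subst hx <;> subst hy <;> ring
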